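/- g* = lcm(δ_1,...,δ_n) + 1 is minimal among granularities containing all former modal points: if a granularity h ≥ 2 is such that for every i and every j ∈ {0,...,2δ_i}, j/(2δ_i) = j'/(2(h-1)) for some integer j', then h - 1 is a common multiple of δ_1,...,δ_n, hence h ≥ g*. -/

import Mathlib

open Finset

/-- minimality of g* = lcm(δ₁,...,δₙ) + 1: if every former modal
point j/(2 δ_i) of every level i is a former modal point of granularity h ≥ 2,
then each δ_i divides h - 1, hence g* ≤ h. -/
theorem stmt14 (n : ℕ) (g : Fin n → ℕ)
    (hodd : ∀ i, Odd (g i)) (hg : ∀ i, 3 ≤ g i)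
    (δ : Fin n → ℕ) (hδ : ∀ i, δ i = g i - 1)
    (gstar : ℕ) (hgstar : gstar = Finset.univ.lcm δ + 1)
    (h : ℕ) (hh : 2 ≤ h)
    (hmodal : ∀ i : Fin n, ∀ j : ℕ, j ≤ 2 * δ i →
      ∃ j' : ℕ, (j : ℝ) / (2 * (δ i : ℝ)) = (j' : ℝ) / (2 * ((h : ℝ) - 1))) :
    (∀ i, δ i ∣ (h - 1)) ∧ gstar ≤ h := by
  have hdvd : ∀ i, δ i ∣ (h - 1) := by
    intro i
    have hδpos : 0 < δ i := by
      have := hg i; have := hδ i; omega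
    obtain ⟨j', hj'⟩ := hmodal i 1 (by omega)
    have hδR : (0:ℝ) < (δ i : ℝ) := by exact_mod_cast hδpos
    have hhR : (0:ℝ) < (h : ℝ) - 1 := by
      have : (1:ℝ) < (h:ℝ) := by exact_mod_cast (by omega : 1 < h)
      linarith
    have key : ((h : ℝ) - 1) = (j' : ℝ) * (δ i : ℝ) := by
      field_simp at hj'
      push_cast at hj'
      linarith
    have hcast : ((h - 1 : ℕ) : ℝ) = ((j' * δ i : ℕ) : ℝ) := by
      rw [Nat.cast_sub (by omega : 1 ≤ h)]
      push_cast
      linarith [key]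
    have heq : h - 1 = j' * δ i := by exact_mod_cast hcast
    exact ⟨j', by rw [heq, Nat.mul_comm]⟩
  refine ⟨hdvd, ?_⟩
  have hlcm : Finset.univ.lcm δ ∣ (h - 1) := Finset.lcm_dvd fun i _ => hdvd i
  have : Finset.univ.lcm δ ≤ h - 1 := Nat.le_of_dvd (by omega) hlcm
  omega
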